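/- Let u = (1+x+x²)/(2x) in the field ℚ(x) of rational functions over ℚ, and let U_m denote the m-th Chebyshev polynomial of the second kind (U_0 = 1, U_1 = 2x, U_m = 2x·U_{m−1} − U_{m−2}). Then for every m ≥ 1, as identities in ℚ(x): A_m(x) = x^{m−1}(1+x)·U_m(u) − x^{m−2}(1+x+x²)·U_{m−1}(u), and B_m(x) = x^m·U_m(u) + x^{m+2}·U_{m−1}(u). -/
import Mathlib

open Polynomial

/-- The rank generating function polynomials `A m` of the matchable Lucas cubes `Ω_{2m}`. -/
noncomputable def A : ℕ → Polynomial ℤ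
  | 0 => 1
  | 1 => 1 + X + X ^ 2
  | 2 => 1 + X + 2 * X ^ 2 + 2 * X ^ 3 + X ^ 4
  | (m + 3) => (1 + X + X ^ 2) * A (m + 2) - X ^ 2 * A (m + 1)

/-- The rank generating function polynomials `B m` of the matchable Lucas cubes `Ω_{2m+1}`. -/
noncomputable def B : ℕ → Polynomial ℤ
  | 0 => 1 + X
  | 1 => 1 + X + X ^ 2 + X ^ 3
  | 2 => 1 + 2 * X + 2 * X ^ 2 + 3 * X ^ 3 + 2 * X ^ 4 + X ^ 5
  | (m + 3) => (1 + X + X ^ 2) * B (m + 2) - X ^ 2 * B (m + 1)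

noncomputable def x : RatFunc ℚ := RatFunc.X

/-- `u = (1+x+x²)/(2x)` in the field `ℚ(x)`. -/
noncomputable def u : RatFunc ℚ := (1 + x + x ^ 2) / (2 * x)

noncomputable def e (n : ℤ) : RatFunc ℚ := Polynomial.eval u (Polynomial.Chebyshev.U (RatFunc ℚ) n)

lemma e_def (n : ℤ) : Polynomial.eval u (Polynomial.Chebyshev.U (RatFunc ℚ) n) = e n := rfl

lemma hx : x ≠ 0 := RatFunc.X_ne_zero

lemma h2 : (2 : RatFunc ℚ) ≠ 0 := by
  have h : algebraMap (Polynomial ℚ) (RatFunc ℚ) 2 ≠ 0 :=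
    RatFunc.algebraMap_ne_zero (by norm_num)
  rwa [map_ofNat] at h

lemma hu : 2 * x * u = 1 + x + x ^ 2 := by
  rw [u, mul_comm, div_mul_cancel₀]
  exact mul_ne_zero h2 hx

lemma e_zero : e 0 = 1 := by simp [e]

lemma e_one : x * e 1 = 1 + x + x ^ 2 := by
  have : e 1 = 2 * u := by simp [e]
  rw [this]
  linear_combination hu

lemma e_rec (n : ℤ) : e (n + 2) = 2 * u * e (n + 1) - e n := by
  simp [e, Polynomial.Chebyshev.U_add_two]

lemma e_rec' (n : ℤ) : x * e (n + 2) = (1 + x + x ^ 2) * e (n + 1) - x * e n := by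
  linear_combination x * e_rec n + e (n + 1) * hu

lemma e_two' : x ^ 2 * e 2 = (1 + x + x ^ 2) ^ 2 - x ^ 2 := by
  have h := e_rec' 0
  norm_num [e_zero] at h
  linear_combination x * h + (1 + x + x ^ 2) * e_one

def Q (m : ℕ) : Prop :=
    (x * Polynomial.aeval x (A (m + 1))
        = x ^ (m + 1) * (1 + x) * e ((m : ℤ) + 1)
          - x ^ m * (1 + x + x ^ 2) * e m) ∧
    (Polynomial.aeval x (B (m + 1))
        = x ^ (m + 1) * e ((m : ℤ) + 1) + x ^ (m + 3) * e m)

lemma Q0 : Q 0 := by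
  constructor
  · show x * Polynomial.aeval x (1 + X + X ^ 2 : Polynomial ℤ) = _
    simp only [map_add, map_one, map_pow, aeval_X, Nat.cast_zero, zero_add, e_zero]
    linear_combination (-(1 : RatFunc ℚ) - x) * e_one
  · show Polynomial.aeval x (1 + X + X ^ 2 + X ^ 3 : Polynomial ℤ) = _
    simp only [map_add, map_one, map_pow, aeval_X, Nat.cast_zero, zero_add, e_zero]
    linear_combination -e_one

lemma Q1 : Q 1 := by
  have h2' : e ((1 : ℤ) + 1) = e 2 := by norm_num
  constructor
  · show x * Polynomial.aeval x (1 + X + 2 * X ^ 2 + 2 * X ^ 3 + X ^ 4 : Polynomial ℤ) = _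
    simp only [map_add, map_one, map_pow, map_mul, map_ofNat, aeval_X, Nat.cast_one, h2']
    linear_combination (-(1 : RatFunc ℚ) - x) * e_two' + (1 + x + x ^ 2) * e_one
  · show Polynomial.aeval x
        (1 + 2 * X + 2 * X ^ 2 + 3 * X ^ 3 + 2 * X ^ 4 + X ^ 5 : Polynomial ℤ) = _
    simp only [map_add, map_one, map_pow, map_mul, map_ofNat, aeval_X, Nat.cast_one, h2']
    linear_combination -e_two' - x ^ 3 * e_one

lemma Qstep (m : ℕ) (h0 : Q m) (h1 : Q (m + 1)) : Q (m + 2) := by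
  obtain ⟨ha0, hb0⟩ := h0
  obtain ⟨ha1, hb1⟩ := h1
  have r0 := e_rec' (m : ℤ)
  have r1 := e_rec' ((m : ℤ) + 1)
  rw [show ((m : ℤ) + 1 + 2) = (m : ℤ) + 3 by ring,
    show ((m : ℤ) + 1 + 1) = (m : ℤ) + 2 by ring] at r1
  push_cast at ha1 hb1
  rw [show ((m : ℤ) + 1 + 1) = (m : ℤ) + 2 by ring] at ha1 hb1
  unfold Q
  push_cast
  rw [show ((m : ℤ) + 2 + 1) = (m : ℤ) + 3 by ring]
  constructor
  · show x * Polynomial.aeval x ((1 + X + X ^ 2) * A (m + 2) - X ^ 2 * A (m + 1)) = _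
    simp only [map_sub, map_mul, map_add, map_one, map_pow, aeval_X]
    linear_combination (1 + x + x ^ 2) * ha1 - x ^ 2 * ha0 - x ^ (m + 2) * (1 + x) * r1
      + x ^ (m + 1) * (1 + x + x ^ 2) * r0
  · show Polynomial.aeval x ((1 + X + X ^ 2) * B (m + 2) - X ^ 2 * B (m + 1)) = _
    simp only [map_sub, map_mul, map_add, map_one, map_pow, aeval_X]
    linear_combination (1 + x + x ^ 2) * hb1 - x ^ 2 * hb0 - x ^ (m + 2) * r1 - x ^ (m + 4) * r0

lemma Qall (m : ℕ) : Q m ∧ Q (m + 1) := by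
  induction m with
  | zero => exact ⟨Q0, Q1⟩
  | succ n ih => exact ⟨ih.2, Qstep n ih.1 ih.2⟩

theorem A_B_via_Chebyshev (m : ℕ) (hm : 1 ≤ m) :
    (Polynomial.aeval x (A m)
        = x ^ ((m : ℤ) - 1) * (1 + x) * Polynomial.eval u (Polynomial.Chebyshev.U (RatFunc ℚ) m)
          - x ^ ((m : ℤ) - 2) * (1 + x + x ^ 2)
            * Polynomial.eval u (Polynomial.Chebyshev.U (RatFunc ℚ) ((m : ℤ) - 1))) ∧
    (Polynomial.aeval x (B m)
        = x ^ (m : ℤ) * Polynomial.eval u (Polynomial.Chebyshev.U (RatFunc ℚ) m)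
          + x ^ ((m : ℤ) + 2)
            * Polynomial.eval u (Polynomial.Chebyshev.U (RatFunc ℚ) ((m : ℤ) - 1))) := by
  obtain ⟨k, rfl⟩ : ∃ k, m = k + 1 := ⟨m - 1, (Nat.succ_pred_eq_of_pos hm).symm⟩
  obtain ⟨hQ1, hQ2⟩ := (Qall k).1
  have hinv : x * x⁻¹ = 1 := mul_inv_cancel₀ hx
  simp only [e_def]
  push_cast
  rw [show ((k : ℤ) + 1 - 1) = (k : ℤ) by ring, show ((k : ℤ) + 1 - 2) = (k : ℤ) - 1 by ring]
  constructor
  · apply mul_left_cancel₀ hx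
    rw [zpow_sub_one₀ hx, zpow_natCast]
    linear_combination hQ1 + x ^ k * (1 + x + x ^ 2) * e (k : ℤ) * hinv
  · rw [show ((k : ℤ) + 1 + 2) = (k : ℤ) + 3 by ring, zpow_add₀ hx, zpow_add₀ hx,
      zpow_natCast, zpow_one, show ((3 : ℤ)) = ((3 : ℕ) : ℤ) by norm_num, zpow_natCast]
    linear_combination hQ2
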